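/- Let (M,d) be a metric space, q ≥ 0, and let (A_0, …, A_q) be a q-partition of M. Let i ≠ j be two indices and let W ⊆ A_i be a subset such that the collection consisting of W together with all A_k for k ∉ {i,j} is coarsely transverse. Then the family obtained from (A_0, …, A_q) by replacing A_i with A_i ∖ W and A_j with A_j ∪ W is again a q-partition of M. -/
import Mathlib


open Metric Bornology Set

/-- A finite collection of subsets of a metric space is *coarsely transverse* if for every
`r > 0` the intersection of their `r`-thickenings is bounded. -/
def CoarselyTransverse {M : Type*} [MetricSpace M] {ι : Type*} (Z : ι → Set M) : Prop :=
  ∀ r : ℝ, 0 < r → IsBounded (⋂ i, cthickening r (Z i))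

/-- A *q-partition* of `M`: an ordered collection of pairwise disjoint sets with union `M`
which forms a coarsely transverse collection. -/
def IsQPartition {M : Type*} [MetricSpace M] {ι : Type*} (A : ι → Set M) : Prop :=
  Pairwise (Function.onFun Disjoint A) ∧ (⋃ i, A i) = univ ∧ CoarselyTransverse A

/-- Elementary cobordism: moving a portion `W ⊆ A i` from `A i` to `A j` yields another
`q`-partition, provided `W` together with the `A k`, `k ∉ {i,j}`, is coarsely transverse. -/
theorem qPartition_elementary_cobordism {M : Type*} [MetricSpace M] (q : ℕ)
    (A : Fin (q + 1) → Set M) (hA : IsQPartition A)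
    (i j : Fin (q + 1)) (hij : i ≠ j) (W : Set M) (hWA : W ⊆ A i)
    (hct : ∀ r : ℝ, 0 < r →
      IsBounded (cthickening r W ∩ ⋂ k ∈ {k | k ≠ i ∧ k ≠ j}, cthickening r (A k))) :
    IsQPartition (fun k => if k = i then A i \ W else if k = j then A j ∪ W else A k) := by
  obtain ⟨hdisj, huniv, hctA⟩ := hA
  refine ⟨?_, ?_, ?_⟩
  · intro a b hab
    simp only [Function.onFun]
    by_cases ha : a = i
    · subst ha
      rw [if_pos rfl]
      by_cases hb : b = j
      · subst hb
        rw [if_neg hij.symm, if_pos rfl]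
        exact Set.disjoint_union_right.2
          ⟨(hdisj hij).mono_left diff_subset, Set.disjoint_sdiff_left⟩
      · rw [if_neg (fun h => hab h.symm), if_neg hb]
        exact (hdisj hab).mono_left diff_subset
    · rw [if_neg ha]
      by_cases ha' : a = j
      · subst ha'
        rw [if_pos rfl]
        by_cases hb : b = i
        · subst hb
          rw [if_pos rfl]
          exact (Set.disjoint_union_right.2
            ⟨(hdisj hij).mono_left diff_subset, Set.disjoint_sdiff_left⟩).symm
        · rw [if_neg hb, if_neg (fun h => hab h.symm)]
          exact Set.disjoint_union_left.2
            ⟨hdisj hab, (hdisj (fun h => hb h.symm)).mono_left hWA⟩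
      · rw [if_neg ha']
        by_cases hb : b = i
        · subst hb
          rw [if_pos rfl]
          exact (hdisj hab).mono_right diff_subset
        · rw [if_neg hb]
          by_cases hb' : b = j
          · subst hb'
            rw [if_pos rfl]
            exact Set.disjoint_union_right.2
              ⟨hdisj hab, (hdisj ha).mono_right hWA⟩
          · rw [if_neg hb']
            exact hdisj hab
  · apply eq_univ_of_univ_subset
    rw [← huniv]
    rintro x hx
    rw [mem_iUnion] at hx ⊢
    obtain ⟨k, hk⟩ := hx
    by_cases hxW : x ∈ W
    · exact ⟨j, by simp only [if_neg hij.symm, eq_self_iff_true, if_true]; exact Or.inr hxW⟩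
    · by_cases hk' : k = i
      · exact ⟨i, by simp only [eq_self_iff_true, if_true]; exact ⟨hk' ▸ hk, hxW⟩⟩
      · by_cases hkj : k = j
        · exact ⟨j, by simp only [if_neg hij.symm, eq_self_iff_true, if_true]; exact Or.inl (hkj ▸ hk)⟩
        · exact ⟨k, by simp only [if_neg hk', if_neg hkj]; exact hk⟩
  · intro r hr
    refine ((hctA r hr).union (hct r hr)).subset ?_
    intro x hx
    rw [mem_iInter] at hx
    have hxj := hx j
    simp only [if_neg hij.symm, eq_self_iff_true, if_true, cthickening_union] at hxj
    rcases hxj with h | h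
    · left
      rw [mem_iInter]
      intro k
      by_cases hk : k = i
      · subst hk
        have := hx k
        simp only [eq_self_iff_true, if_true] at this
        exact cthickening_subset_of_subset r diff_subset this
      · by_cases hk' : k = j
        · subst hk'; exact h
        · have := hx k
          simpa only [if_neg hk, if_neg hk'] using this
    · right
      refine ⟨h, ?_⟩
      rw [mem_iInter₂]
      intro k hk
      have := hx k
      simpa only [if_neg hk.1, if_neg hk.2] using this
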